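/- arXiv:1503.07086 — 4 statements merged into one kernel-verified Lean document; each statement's English description precedes it below -/
import Mathlib

section
/- For all real numbers a, b ≥ 0 and λ, μ > 0, one has a^λ · b^μ ≤ (λ^λ μ^μ / (λ+μ)^(λ+μ)) · (a+b)^(λ+μ). -/
open Real

theorem young_type_inequality (a b l m : ℝ) (ha : 0 ≤ a) (hb : 0 ≤ b)
    (hl : 0 < l) (hm : 0 < m) :
    a ^ l * b ^ m ≤ (l ^ l * m ^ m / (l + m) ^ (l + m)) * (a + b) ^ (l + m) := by
  set s := l + m with hs
  have hspos : 0 < s := by positivity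
  have hsum : l / s + m / s = 1 := by field_simp; exact hs.symm
  have hamgm : (a / l) ^ (l / s) * (b / m) ^ (m / s) ≤ (l / s) * (a / l) + (m / s) * (b / m) :=
    Real.geom_mean_le_arith_mean2_weighted (by positivity) (by positivity)
      (by positivity) (by positivity) hsum
  have hrhs : (l / s) * (a / l) + (m / s) * (b / m) = (a + b) / s := by
    field_simp
  rw [hrhs] at hamgm
  have hpow : ((a / l) ^ (l / s) * (b / m) ^ (m / s)) ^ s ≤ ((a + b) / s) ^ s :=
    Real.rpow_le_rpow (by positivity) hamgm hspos.le
  have hl1 : ((a / l) ^ (l / s)) ^ s = (a / l) ^ l := by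
    rw [← Real.rpow_mul (by positivity), div_mul_cancel₀ _ hspos.ne']
  have hm1 : ((b / m) ^ (m / s)) ^ s = (b / m) ^ m := by
    rw [← Real.rpow_mul (by positivity), div_mul_cancel₀ _ hspos.ne']
  rw [Real.mul_rpow (by positivity) (by positivity), hl1, hm1,
    Real.div_rpow (by positivity) hspos.le, Real.div_rpow ha hl.le,
    Real.div_rpow hb hm.le] at hpow
  have hll : (0:ℝ) < l ^ l := Real.rpow_pos_of_pos hl _
  have hmm : (0:ℝ) < m ^ m := Real.rpow_pos_of_pos hm _
  have hss : (0:ℝ) < s ^ s := Real.rpow_pos_of_pos hspos _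
  calc a ^ l * b ^ m = (a ^ l / l ^ l * (b ^ m / m ^ m)) * (l ^ l * m ^ m) := by
        field_simp
    _ ≤ ((a + b) ^ s / s ^ s) * (l ^ l * m ^ m) := by
        apply mul_le_mul_of_nonneg_right hpow (by positivity)
    _ = (l ^ l * m ^ m / s ^ s) * (a + b) ^ s := by ring
end

section
/- Let φ : ℝ → ℝ be continuously differentiable with φ' ≥ 0, and suppose there exist r > 1 and M ≥ 0 such that φ is twice differentiable with |φ''(s)| ≤ M · φ'(s)^(1/r) for all s ∈ ℝ. Then for all a, b ∈ ℝ, |∫₀¹ (φ'(t·a + (1−t)·b) − φ'(b)) dt| ≤ |a − b| · M · ((r−1)/(2r−1))^((r−1)/r) · (∫₀¹ φ'(t·a + (1−t)·b) dt)^(1/r). -/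
open Real intervalIntegral MeasureTheory

private lemma memLp_aux {f : ℝ → ℝ} (hf : Continuous f) (e : ENNReal) :
    MemLp f e (volume.restrict (Set.Ioc (0:ℝ) 1)) := by
  have hfin : IsFiniteMeasure (volume.restrict (Set.Ioc (0:ℝ) 1)) :=
    ⟨by rw [Measure.restrict_apply_univ]; simp [Real.volume_Ioc]⟩
  obtain ⟨C, hC⟩ :=
    (isCompact_Icc (a := (0:ℝ)) (b := 1)).exists_bound_of_continuousOn hf.continuousOn
  have hb : ∀ᵐ x ∂(volume.restrict (Set.Ioc (0:ℝ) 1)), ‖f x‖ ≤ C :=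
    (ae_restrict_mem measurableSet_Ioc).mono fun x hx => hC x (Set.Ioc_subset_Icc_self hx)
  exact (memLp_top_of_bound hf.aestronglyMeasurable C hb).mono_exponent le_top

private lemma key_aux (ψ : ℝ → ℝ) (r M c b : ℝ)
    (hψcd : ContDiff ℝ 1 ψ) (hnn : ∀ s, 0 ≤ ψ s)
    (hr : 1 < r) (hM : 0 ≤ M)
    (hstruct : ∀ s, |deriv ψ s| ≤ M * ψ s ^ (1 / r)) :
    |∫ t in (0:ℝ)..1, (ψ (b + t * c) - ψ b)| ≤
      |c| * (M * ((r - 1) / (2 * r - 1)) ^ ((r - 1) / r)) *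
        (∫ t in (0:ℝ)..1, ψ (b + t * c)) ^ (1 / r) := by
  have hr0 : (0:ℝ) < r := lt_trans one_pos hr
  have hr1 : (0:ℝ) < r - 1 := by linarith
  have hr2 : (0:ℝ) < 2 * r - 1 := by linarith
  have hψcont : Continuous ψ := hψcd.continuous
  have hψ'cont : Continuous (deriv ψ) := hψcd.continuous_deriv le_rfl
  have hψdiff : Differentiable ℝ ψ := hψcd.differentiable one_ne_zero
  have hgcont : Continuous (fun t : ℝ => ψ (b + t * c)) := by fun_prop
  set h : ℝ → ℝ := fun t => ψ (b + t * c) ^ (1/r) with hhdef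
  have hhcont : Continuous h := by
    apply hgcont.rpow_const
    intro x; right; positivity
  have hhnn : ∀ t, 0 ≤ h t := fun t => Real.rpow_nonneg (hnn _) _
  set H : ℝ → ℝ := fun t => ∫ s in (0:ℝ)..t, h s with hHdef
  have hH' : ∀ t, HasDerivAt H (h t) t := fun t =>
    (hhcont.integral_hasStrictDerivAt 0 t).hasDerivAt
  -- derivative of the composition
  have hgderiv : ∀ t : ℝ, HasDerivAt (fun u : ℝ => ψ (b + u * c)) (deriv ψ (b + t * c) * c) t := by
    intro t
    have hin : HasDerivAt (fun u : ℝ => b + u * c) c t := by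
      exact ((hasDerivAt_const t b).add ((hasDerivAt_id t).mul_const c)).congr_deriv (by simp)
    exact ((hψdiff (b + t * c)).hasDerivAt).comp t hin
  -- FTC
  have hftc : ∀ t : ℝ, ψ (b + t * c) - ψ b = ∫ s in (0:ℝ)..t, deriv ψ (b + s * c) * c := by
    intro t
    have := intervalIntegral.integral_eq_sub_of_hasDerivAt (a := 0) (b := t)
      (f := fun u : ℝ => ψ (b + u * c)) (f' := fun s => deriv ψ (b + s * c) * c)
      (fun s _ => hgderiv s)
      (((hψ'cont.comp (by fun_prop)).mul continuous_const).intervalIntegrable _ _)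
    rw [this]; norm_num
  -- pointwise bound
  have key : ∀ t ∈ Set.Icc (0:ℝ) 1, |ψ (b + t * c) - ψ b| ≤ |c| * M * H t := by
    intro t ht
    rw [hftc t]
    calc |∫ s in (0:ℝ)..t, deriv ψ (b + s * c) * c|
        ≤ ∫ s in (0:ℝ)..t, |deriv ψ (b + s * c) * c| :=
          intervalIntegral.abs_integral_le_integral_abs ht.1
      _ ≤ ∫ s in (0:ℝ)..t, |c| * M * h s := by
          apply intervalIntegral.integral_mono_on ht.1
            (((hψ'cont.comp (by fun_prop)).mul continuous_const).abs.intervalIntegrable _ _)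
            ((continuous_const.mul hhcont).intervalIntegrable _ _)
          intro s _
          show |deriv ψ (b + s * c) * c| ≤ |c| * M * h s
          rw [abs_mul]
          calc |deriv ψ (b + s * c)| * |c| ≤ (M * ψ (b + s * c) ^ (1/r)) * |c| :=
                mul_le_mul_of_nonneg_right (hstruct _) (abs_nonneg c)
            _ = |c| * M * h s := by rw [hhdef]; ring
      _ = |c| * M * H t := by rw [intervalIntegral.integral_const_mul]
  -- integration by parts
  have hIBP : (∫ t in (0:ℝ)..1, H t) = ∫ t in (0:ℝ)..1, (1 - t) * h t := by
    have hibp := intervalIntegral.integral_mul_deriv_eq_deriv_mul (a := (0:ℝ)) (b := 1)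
      (u := H) (u' := h) (v := fun t : ℝ => t) (v' := fun _ => 1)
      (fun x _ => hH' x) (fun x _ => hasDerivAt_id x)
      (hhcont.intervalIntegrable 0 1) (continuous_const.intervalIntegrable 0 1)
    have hH0 : H 0 = 0 := intervalIntegral.integral_same
    calc (∫ t in (0:ℝ)..1, H t) = ∫ x in (0:ℝ)..1, H x * 1 := by simp
      _ = H 1 * 1 - H 0 * 0 - ∫ x in (0:ℝ)..1, h x * x := hibp
      _ = (∫ t in (0:ℝ)..1, h t) - ∫ x in (0:ℝ)..1, h x * x := by
          rw [hH0]; simp only [hHdef]; ring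
      _ = ∫ t in (0:ℝ)..1, (1 - t) * h t := by
          rw [← intervalIntegral.integral_sub (hhcont.intervalIntegrable _ _)
            ((by fun_prop : Continuous fun x : ℝ => h x * x).intervalIntegrable _ _)]
          exact intervalIntegral.integral_congr fun x _ => by ring
  -- Hölder
  have hHolder : (∫ t in (0:ℝ)..1, (1 - t) * h t) ≤
      ((r - 1) / (2 * r - 1)) ^ ((r - 1) / r) * (∫ t in (0:ℝ)..1, ψ (b + t * c)) ^ (1/r) := by
    set p : ℝ := r / (r - 1) with hpdef
    have hp1 : 1 < p := by
      rw [hpdef, lt_div_iff₀ hr1]; linarith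
    have hp0 : (0:ℝ) < p := lt_trans one_pos hp1
    have hpq : Real.HolderConjugate p r := by
      rw [Real.holderConjugate_iff_eq_conjExponent hp1, hpdef]
      field_simp
      ring
    have h1 := integral_mul_le_Lp_mul_Lq_of_nonneg (μ := volume.restrict (Set.Ioc (0:ℝ) 1))
      hpq (f := fun t => 1 - t) (g := h)
      ((ae_restrict_mem measurableSet_Ioc).mono fun x hx => by
        simp only [Pi.zero_apply]; linarith [hx.2])
      (Filter.Eventually.of_forall fun x => hhnn x)
      (memLp_aux (by fun_prop) _) (memLp_aux hhcont _)
    have e1 : (∫ t in Set.Ioc (0:ℝ) 1, (1 - t) ^ p) = (r - 1) / (2 * r - 1) := by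
      rw [← intervalIntegral.integral_of_le zero_le_one]
      rw [intervalIntegral.integral_comp_sub_left (fun x : ℝ => x ^ p) 1]
      norm_num
      rw [integral_rpow (Or.inl (by linarith))]
      rw [Real.one_rpow, Real.zero_rpow (by positivity)]
      rw [hpdef]
      rw [div_eq_div_iff (by positivity) (by positivity)]
      field_simp
      ring
    have e2 : (∫ t in Set.Ioc (0:ℝ) 1, h t ^ r) = ∫ t in Set.Ioc (0:ℝ) 1, ψ (b + t * c) := by
      apply MeasureTheory.integral_congr_ae
      apply Filter.Eventually.of_forall
      intro t
      rw [hhdef]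
      simp only
      rw [← Real.rpow_mul (hnn _), one_div, inv_mul_cancel₀ hr0.ne', Real.rpow_one]
    have hpinv : 1 / p = (r - 1) / r := by
      rw [hpdef]; field_simp
    calc (∫ t in (0:ℝ)..1, (1 - t) * h t)
        = ∫ t in Set.Ioc (0:ℝ) 1, (1 - t) * h t := intervalIntegral.integral_of_le zero_le_one
      _ ≤ (∫ t in Set.Ioc (0:ℝ) 1, (1 - t) ^ p) ^ (1 / p) *
            (∫ t in Set.Ioc (0:ℝ) 1, h t ^ r) ^ (1 / r) := h1
      _ = ((r - 1) / (2 * r - 1)) ^ ((r - 1) / r) *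
            (∫ t in (0:ℝ)..1, ψ (b + t * c)) ^ (1 / r) := by
          rw [e1, e2, hpinv, intervalIntegral.integral_of_le zero_le_one]
  -- final chain
  have hKnn : (0:ℝ) ≤ ((r - 1) / (2 * r - 1)) ^ ((r - 1) / r) :=
    Real.rpow_nonneg (by positivity) _
  calc |∫ t in (0:ℝ)..1, (ψ (b + t * c) - ψ b)|
      ≤ ∫ t in (0:ℝ)..1, |ψ (b + t * c) - ψ b| :=
        intervalIntegral.abs_integral_le_integral_abs zero_le_one
    _ ≤ ∫ t in (0:ℝ)..1, |c| * M * H t := by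
        apply intervalIntegral.integral_mono_on zero_le_one
          ((by fun_prop : Continuous fun t : ℝ => |ψ (b + t * c) - ψ b|).intervalIntegrable _ _)
          ((continuous_const.mul (Differentiable.continuous fun t => (hH' t).differentiableAt)).intervalIntegrable _ _)
          key
    _ = |c| * M * ∫ t in (0:ℝ)..1, H t := intervalIntegral.integral_const_mul _ _
    _ = |c| * M * ∫ t in (0:ℝ)..1, (1 - t) * h t := by rw [hIBP]
    _ ≤ |c| * M * (((r - 1) / (2 * r - 1)) ^ ((r - 1) / r) *
          (∫ t in (0:ℝ)..1, ψ (b + t * c)) ^ (1 / r)) :=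
        mul_le_mul_of_nonneg_left hHolder (by positivity)
    _ = |c| * (M * ((r - 1) / (2 * r - 1)) ^ ((r - 1) / r)) *
          (∫ t in (0:ℝ)..1, ψ (b + t * c)) ^ (1 / r) := by ring

theorem lemma_one (φ : ℝ → ℝ) (r M : ℝ)
    (hφ : ContDiff ℝ 2 φ)
    (hmono : ∀ s : ℝ, 0 ≤ deriv φ s)
    (hr : 1 < r) (hM : 0 ≤ M)
    (hstruct : ∀ s : ℝ, |deriv (deriv φ) s| ≤ M * (deriv φ s) ^ (1 / r))
    (a b : ℝ) :
    |∫ t in (0:ℝ)..1, (deriv φ (t * a + (1 - t) * b) - deriv φ b)| ≤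
      |a - b| * (M * ((r - 1) / (2 * r - 1)) ^ ((r - 1) / r)) *
        (∫ t in (0:ℝ)..1, deriv φ (t * a + (1 - t) * b)) ^ (1 / r) := by
  have h2 : ContDiff ℝ ((1:ℕ∞)+1) φ := by exact_mod_cast hφ
  have hψcd : ContDiff ℝ 1 (deriv φ) := (contDiff_succ_iff_deriv.mp h2).2.2
  have e3 : (∫ t in (0:ℝ)..1, (deriv φ (t * a + (1 - t) * b) - deriv φ b)) =
      ∫ t in (0:ℝ)..1, (deriv φ (b + t * (a - b)) - deriv φ b) :=
    intervalIntegral.integral_congr fun t _ => by rw [show t * a + (1 - t) * b = b + t * (a - b) by ring]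
  have e4 : (∫ t in (0:ℝ)..1, deriv φ (t * a + (1 - t) * b)) =
      ∫ t in (0:ℝ)..1, deriv φ (b + t * (a - b)) :=
    intervalIntegral.integral_congr fun t _ => by rw [show t * a + (1 - t) * b = b + t * (a - b) by ring]
  rw [e3, e4]
  exact key_aux (deriv φ) r M (a - b) b hψcd hmono hr hM hstruct
end

section
/- Let φ : ℝ → ℝ be C² and monotonically increasing, and suppose there exist r > 1 and M ≥ 0 with |φ''(s)| ≤ M φ'(s)^(1/r) for all s ∈ ℝ. Then there exists a constant c₁ > 0 such that φ'(s) ≤ c₁(1 + |s|^(r/(r−1))) for all s ∈ ℝ. -/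
open Real Filter

theorem phi_deriv_growth (φ : ℝ → ℝ) (r M : ℝ)
    (hφ : ContDiff ℝ 2 φ) (hmono : Monotone φ)
    (hr : 1 < r) (hM : 0 ≤ M)
    (hstruct : ∀ s : ℝ, |deriv (deriv φ) s| ≤ M * (deriv φ s) ^ (1 / r)) :
    ∃ c₁ : ℝ, 0 < c₁ ∧ ∀ s : ℝ, deriv φ s ≤ c₁ * (1 + |s| ^ (r / (r - 1))) := by
  have hr0 : (0:ℝ) < r := lt_trans one_pos hr
  -- differentiability facts
  have h2 : ContDiff ℝ (1+1 : WithTop ℕ∞) φ := by norm_num at hφ ⊢; exact hφ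
  rw [contDiff_succ_iff_deriv] at h2
  have hdiff : Differentiable ℝ φ := h2.1
  have hψdiff : Differentiable ℝ (deriv φ) := h2.2.2.differentiable one_ne_zero
  set ψ := deriv φ with hψdef
  -- nonnegativity of ψ
  have hψ0 : ∀ s, 0 ≤ ψ s := by
    intro s
    have h := (hdiff s).hasDerivAt
    rw [hasDerivAt_iff_tendsto_slope] at h
    have h2' : Tendsto (slope φ s) (nhdsWithin s (Set.Ioi s)) (nhds (ψ s)) :=
      h.mono_left (nhdsWithin_mono s (fun x hx => ne_of_gt hx))
    refine ge_of_tendsto h2' ?_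
    filter_upwards [self_mem_nhdsWithin] with x hx
    have : (0:ℝ) ≤ (φ x - φ s) / (x - s) :=
      div_nonneg (sub_nonneg.2 (hmono (le_of_lt hx))) (sub_nonneg.2 (le_of_lt hx))
    simpa [slope_def_field, div_eq_mul_inv] using this
  set a : ℝ := (r-1)/r with hadef
  have ha0 : 0 < a := div_pos (by linarith) hr0
  have ha1 : a < 1 := by rw [hadef, div_lt_one hr0]; linarith
  have har : a - 1 + 1/r = 0 := by
    rw [hadef, sub_add_eq_add_sub, ← add_div, sub_add_cancel, div_self hr0.ne', sub_self]
  set g : ℝ → ℝ := fun s => (ψ s + 1) ^ a with hgdef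
  have hpos : ∀ s, (0:ℝ) < ψ s + 1 := fun s => by linarith [hψ0 s]
  have hg : ∀ s, HasDerivAt g ((a * (ψ s + 1)^(a-1)) * deriv ψ s) s := by
    intro s
    have h1 : HasDerivAt (fun s => ψ s + 1) (deriv ψ s) s :=
      ((hψdiff s).hasDerivAt).add_const 1
    exact (Real.hasDerivAt_rpow_const (Or.inl (ne_of_gt (hpos s)))).comp s h1
  have hgb : ∀ s, ‖deriv g s‖ ≤ a * M := by
    intro s
    rw [(hg s).deriv]
    rw [Real.norm_eq_abs, abs_mul, abs_of_nonneg (mul_nonneg ha0.le (Real.rpow_nonneg (hpos s).le _))]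
    calc a * (ψ s + 1)^(a-1) * |deriv ψ s|
        ≤ a * (ψ s + 1)^(a-1) * (M * (ψ s) ^ (1/r)) := by
          apply mul_le_mul_of_nonneg_left (hstruct s) (mul_nonneg ha0.le (Real.rpow_nonneg (hpos s).le _))
      _ ≤ a * (ψ s + 1)^(a-1) * (M * (ψ s + 1) ^ (1/r)) := by
          apply mul_le_mul_of_nonneg_left _ (mul_nonneg ha0.le (Real.rpow_nonneg (hpos s).le _))
          exact mul_le_mul_of_nonneg_left
            (Real.rpow_le_rpow (hψ0 s) (by linarith) (by positivity)) hM
      _ = a * M * ((ψ s + 1)^(a-1) * (ψ s + 1) ^ (1/r)) := by ring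
      _ = a * M := by
          rw [← Real.rpow_add (hpos s), har, Real.rpow_zero, mul_one]
  have key : ∀ s, g s ≤ g 0 + (a*M) * |s| := by
    intro s
    have hdg : ∀ x ∈ (Set.univ : Set ℝ), DifferentiableAt ℝ g x :=
      fun x _ => (hg x).differentiableAt
    have := convex_univ.norm_image_sub_le_of_norm_deriv_le hdg
      (fun x _ => hgb x) (Set.mem_univ (0:ℝ)) (Set.mem_univ s)
    have h' : g s - g 0 ≤ a * M * |s| := by
      calc g s - g 0 ≤ ‖g s - g 0‖ := le_abs_self _
        _ ≤ a * M * ‖s - 0‖ := this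
        _ = a * M * |s| := by rw [sub_zero, Real.norm_eq_abs]
    linarith
  -- choose constants
  set A : ℝ := max ((ψ 0 + 1)^a) (a*M) with hAdef
  have hA0 : 0 < A := lt_max_of_lt_left (Real.rpow_pos_of_pos (hpos 0) a)
  have hbound : ∀ s, ψ s + 1 ≤ (A * (1 + |s|)) ^ (1/a) := by
    intro s
    have h1 : g s ≤ A * (1 + |s|) := by
      have : g 0 + a*M*|s| ≤ A + A * |s| := by
        have h2 := le_max_left ((ψ 0 + 1)^a) (a*M)
        have h3 := le_max_right ((ψ 0 + 1)^a) (a*M)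
        have := mul_le_mul_of_nonneg_right h3 (abs_nonneg s)
        simp only [hgdef]
        nlinarith
      calc g s ≤ g 0 + a*M*|s| := key s
        _ ≤ A + A*|s| := this
        _ = A * (1 + |s|) := by ring
    have h2 : (g s) ^ (1/a) ≤ (A * (1+|s|)) ^ (1/a) :=
      Real.rpow_le_rpow (Real.rpow_nonneg (hpos s).le _) h1 (by positivity)
    have h3 : (g s) ^ (1/a) = ψ s + 1 := by
      rw [hgdef]
      rw [← Real.rpow_mul (le_of_lt (hpos s)), mul_one_div, div_self (ne_of_gt ha0),
        Real.rpow_one]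
    linarith [h2, h3.symm.le, h3.le]
  have hq : 1/a = r/(r-1) := by
    rw [hadef]; rw [one_div_div]
  refine ⟨A ^ (1/a) * 2 ^ (1/a), by positivity, fun s => ?_⟩
  have hb := hbound s
  have hsplit : (A * (1 + |s|)) ^ (1/a) = A ^ (1/a) * (1 + |s|) ^ (1/a) :=
    Real.mul_rpow (le_of_lt hA0) (by positivity)
  have h4 : (1 + |s|) ^ (1/a) ≤ 2 ^ (1/a) * (1 + |s| ^ (r/(r-1))) := by
    have hm : (1:ℝ) + |s| ≤ 2 * max 1 |s| := by
      rcases le_total (|s|) 1 with h | h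
      · have := le_max_left (1:ℝ) |s|; nlinarith
      · have := le_max_right (1:ℝ) |s|; nlinarith
    calc (1 + |s|) ^ (1/a) ≤ (2 * max 1 |s|) ^ (1/a) :=
          Real.rpow_le_rpow (by positivity) hm (by positivity)
      _ = 2 ^ (1/a) * (max 1 |s|) ^ (1/a) := Real.mul_rpow (by norm_num) (le_trans zero_le_one (le_max_left _ _))
      _ ≤ 2 ^ (1/a) * (1 + |s| ^ (r/(r-1))) := by
          apply mul_le_mul_of_nonneg_left _ (by positivity)
          rcases le_total (|s|) 1 with h | h
          · rw [max_eq_left h, Real.one_rpow]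
            have : (0:ℝ) ≤ |s| ^ (r/(r-1)) := by positivity
            linarith
          · rw [max_eq_right h, hq]
            have : (0:ℝ) ≤ |s| ^ (r/(r-1)) := by positivity
            linarith
  calc ψ s ≤ ψ s + 1 := by linarith
    _ ≤ (A * (1 + |s|)) ^ (1/a) := hb
    _ = A ^ (1/a) * (1 + |s|) ^ (1/a) := hsplit
    _ ≤ A ^ (1/a) * (2 ^ (1/a) * (1 + |s| ^ (r/(r-1)))) :=
        mul_le_mul_of_nonneg_left h4 (by positivity)
    _ = A ^ (1/a) * 2 ^ (1/a) * (1 + |s| ^ (r/(r-1))) := by ring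
end

section
/- Let φ : ℝ → ℝ be C² and monotonically increasing, and suppose there exist r > 1 and M ≥ 0 with |φ''(s)| ≤ M φ'(s)^(1/r) for all s ∈ ℝ. Then there exists a constant c₀ > 0 such that |φ(s)| ≤ c₀(1 + |s|^((2r−1)/(r−1))) for all s ∈ ℝ. -/
open Real Filter

lemma mono_deriv_nonneg {φ : ℝ → ℝ} (hm : Monotone φ) (x : ℝ)
    (hd : DifferentiableAt ℝ φ x) : 0 ≤ deriv φ x := by
  have h := hd.hasDerivAt
  rw [hasDerivAt_iff_tendsto_slope] at h
  have h2 : Tendsto (slope φ x) (nhdsWithin x (Set.Ioi x)) (nhds (deriv φ x)) :=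
    h.mono_left (nhdsWithin_mono _ (fun y hy => ne_of_gt hy))
  refine ge_of_tendsto h2 ?_
  filter_upwards [self_mem_nhdsWithin] with y hy
  have hxy : x < y := hy
  have : 0 ≤ φ y - φ x := sub_nonneg.mpr (hm hxy.le)
  have : 0 ≤ (y - x)⁻¹ * (φ y - φ x) :=
    mul_nonneg (inv_nonneg.mpr (sub_nonneg.mpr hxy.le)) this
  simpa [slope, vsub_eq_sub, smul_eq_mul] using this

theorem phi_growth (φ : ℝ → ℝ) (r M : ℝ)
    (hφ : ContDiff ℝ 2 φ) (hmono : Monotone φ)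
    (hr : 1 < r) (hM : 0 ≤ M)
    (hstruct : ∀ s : ℝ, |deriv (deriv φ) s| ≤ M * (deriv φ s) ^ (1 / r)) :
    ∃ c₀ : ℝ, 0 < c₀ ∧ ∀ s : ℝ, |φ s| ≤ c₀ * (1 + |s| ^ ((2 * r - 1) / (r - 1))) := by
  have hr0 : (0:ℝ) < r := lt_trans one_pos hr
  have hr1 : (0:ℝ) < r - 1 := sub_pos.mpr hr
  -- differentiability facts
  have hφ1 : Differentiable ℝ φ := hφ.differentiable (by norm_num)
  have hφ'c : ContDiff ℝ 1 (deriv φ) := by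
    have := (contDiff_succ_iff_deriv (n := 1)).mp (by exact_mod_cast hφ)
    exact this.2.2
  have hφ'd : Differentiable ℝ (deriv φ) := hφ'c.differentiable (by norm_num)
  -- nonnegativity of deriv φ
  have hderiv_nonneg : ∀ s, 0 ≤ deriv φ s := fun s =>
    mono_deriv_nonneg hmono s (hφ1 s)
  -- g = deriv φ + 1 > 0
  set g : ℝ → ℝ := fun s => deriv φ s + 1 with hg_def
  have hg_pos : ∀ s, 0 < g s := fun s => by
    have := hderiv_nonneg s; simp only [hg_def]; linarith
  have hg_one : ∀ s, 1 ≤ g s := fun s => by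
    have := hderiv_nonneg s; simp only [hg_def]; linarith
  set a : ℝ := (r - 1) / r with ha_def
  have ha_pos : 0 < a := div_pos hr1 hr0
  have ha_lt : a < 1 := (div_lt_one hr0).mpr (by linarith)
  set p : ℝ := r / (r - 1) with hp_def
  have hp_pos : 0 < p := div_pos hr0 hr1
  have hap : a * p = 1 := by
    rw [ha_def, hp_def]
    field_simp
  -- h = g ^ a, derivative bounded by M
  set h : ℝ → ℝ := fun s => g s ^ a with hh_def
  have hhd : ∀ s, HasDerivAt h (deriv (deriv φ) s * a * g s ^ (a - 1)) s := by
    intro s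
    have h1 : HasDerivAt g (deriv (deriv φ) s) s :=
      ((hφ'd s).hasDerivAt).add_const 1
    exact h1.rpow_const (Or.inl (ne_of_gt (hg_pos s)))
  have hhd_bound : ∀ s, |deriv (deriv φ) s * a * g s ^ (a - 1)| ≤ M := by
    intro s
    have h1 : |deriv (deriv φ) s| ≤ M * g s ^ (1 / r) := by
      refine (hstruct s).trans ?_
      gcongr
      · exact hderiv_nonneg s
      · simp [hg_def]
    have hga : (0:ℝ) < g s ^ (a - 1) := rpow_pos_of_pos (hg_pos s) _
    calc |deriv (deriv φ) s * a * g s ^ (a - 1)|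
        = |deriv (deriv φ) s| * a * g s ^ (a - 1) := by
          rw [abs_mul, abs_mul, abs_of_pos ha_pos, abs_of_pos hga]
      _ ≤ (M * g s ^ (1 / r)) * a * g s ^ (a - 1) := by
          gcongr
      _ = M * a * (g s ^ (1 / r) * g s ^ (a - 1)) := by ring
      _ = M * a * g s ^ (1 / r + (a - 1)) := by
          rw [← Real.rpow_add (hg_pos s)]
      _ = M * a := by
          have : 1 / r + (a - 1) = 0 := by
            rw [ha_def]
            field_simp
            ring
          rw [this, Real.rpow_zero, mul_one]
      _ ≤ M := by nlinarith
  -- Lipschitz bound on h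
  have hlip : ∀ s : ℝ, |h s - h 0| ≤ M * |s| := by
    intro s
    have := Convex.norm_image_sub_le_of_norm_hasDerivWithin_le
      (f := h) (f' := fun s => deriv (deriv φ) s * a * g s ^ (a - 1)) (C := M)
      (fun x _ => (hhd x).hasDerivWithinAt)
      (fun x _ => by rw [Real.norm_eq_abs]; exact hhd_bound x)
      convex_univ (Set.mem_univ 0) (Set.mem_univ s)
    simpa using this
  -- pointwise bound on deriv φ
  have hh0_pos : 0 < h 0 := rpow_pos_of_pos (hg_pos 0) _
  have hgs_bound : ∀ s, deriv φ s ≤ (h 0 + M * |s|) ^ p := by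
    intro s
    have h1 : h s ≤ h 0 + M * |s| := by
      have := hlip s
      have := abs_le.mp this
      linarith [this.2]
    have h2 : g s = h s ^ p := by
      simp only [hh_def]
      rw [← Real.rpow_mul (hg_pos s).le, hap, Real.rpow_one]
    have h3 : h s ^ p ≤ (h 0 + M * |s|) ^ p :=
      Real.rpow_le_rpow (rpow_pos_of_pos (hg_pos s) _).le h1 hp_pos.le
    have h4 : deriv φ s ≤ g s := by simp [hg_def]
    calc deriv φ s ≤ g s := h4
      _ = h s ^ p := h2
      _ ≤ (h 0 + M * |s|) ^ p := h3
  -- bound |φ s - φ 0|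
  have hphi_bound : ∀ s : ℝ, |φ s - φ 0| ≤ (h 0 + M * |s|) ^ p * |s| := by
    intro s
    have hconv : Convex ℝ (Set.uIcc (0:ℝ) s) := convex_uIcc _ _
    have habs : ∀ t ∈ Set.uIcc (0:ℝ) s, |t| ≤ |s| := by
      intro t ht
      rw [Set.uIcc_eq_union] at ht
      rcases ht with ht | ht
      · rcases Set.mem_Icc.mp ht with ⟨h1, h2⟩
        rw [abs_of_nonneg h1]; exact h2.trans (le_abs_self s)
      · rcases Set.mem_Icc.mp ht with ⟨h1, h2⟩
        rw [abs_of_nonpos h2]; calc -t ≤ -s := neg_le_neg h1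
          _ ≤ |s| := neg_le_abs s
    have := Convex.norm_image_sub_le_of_norm_hasDerivWithin_le
      (f := φ) (f' := deriv φ) (C := (h 0 + M * |s|) ^ p)
      (fun x _ => ((hφ1 x).hasDerivAt).hasDerivWithinAt)
      (fun x hx => by
        have h1 : deriv φ x ≤ (h 0 + M * |x|) ^ p := hgs_bound x
        have h2 : (h 0 + M * |x|) ^ p ≤ (h 0 + M * |s|) ^ p := by
          refine Real.rpow_le_rpow ?_ ?_ hp_pos.le
          · have := mul_nonneg hM (abs_nonneg x); linarith [hh0_pos]
          · have := mul_le_mul_of_nonneg_left (habs x hx) hM; linarith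
        simpa [abs_of_nonneg (hderiv_nonneg x)] using h1.trans h2)
      hconv Set.left_mem_uIcc Set.right_mem_uIcc
    simpa using this
  -- assemble constant
  set q : ℝ := (2 * r - 1) / (r - 1) with hq_def
  have hpq : p + 1 = q := by
    rw [hp_def, hq_def]
    field_simp
    ring
  have hq_pos : 0 < q := by rw [← hpq]; linarith
  set K : ℝ := (h 0 + M) ^ p with hK_def
  have hK_pos : 0 < K := rpow_pos_of_pos (by linarith) _
  refine ⟨|φ 0| + K * 2 ^ q + 1, by positivity, ?_⟩
  intro s
  have hbase : (0:ℝ) ≤ 1 + |s| := by positivity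
  -- (h 0 + M*|s|)^p * |s| ≤ K * (1+|s|)^q
  have step1 : (h 0 + M * |s|) ^ p * |s| ≤ K * (1 + |s|) ^ q := by
    have h1 : h 0 + M * |s| ≤ (h 0 + M) * (1 + |s|) := by
      have := abs_nonneg s; nlinarith [hh0_pos]
    have h2 : (h 0 + M * |s|) ^ p ≤ ((h 0 + M) * (1 + |s|)) ^ p := by
      refine Real.rpow_le_rpow ?_ h1 hp_pos.le
      have := mul_nonneg hM (abs_nonneg s); linarith [hh0_pos]
    have h3 : ((h 0 + M) * (1 + |s|)) ^ p = K * (1 + |s|) ^ p := by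
      rw [Real.mul_rpow (by linarith) hbase]
    have h4 : (1 + |s|) ^ p * |s| ≤ (1 + |s|) ^ p * (1 + |s|) := by
      have hb : (0:ℝ) ≤ (1 + |s|) ^ p := Real.rpow_nonneg hbase p
      have : |s| ≤ 1 + |s| := by linarith [abs_nonneg s]
      exact mul_le_mul_of_nonneg_left this hb
    have h5 : (1 + |s|) ^ p * (1 + |s|) = (1 + |s|) ^ q := by
      rw [← hpq, Real.rpow_add_one (by positivity)]
    calc (h 0 + M * |s|) ^ p * |s| ≤ K * (1 + |s|) ^ p * |s| := by
          rw [← h3]; exact mul_le_mul_of_nonneg_right h2 (abs_nonneg s)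
      _ = K * ((1 + |s|) ^ p * |s|) := by ring
      _ ≤ K * ((1 + |s|) ^ p * (1 + |s|)) := mul_le_mul_of_nonneg_left h4 hK_pos.le
      _ = K * (1 + |s|) ^ q := by rw [h5]
  -- (1+|s|)^q ≤ 2^q * (1 + |s|^q)
  have step2 : (1 + |s|) ^ q ≤ 2 ^ q * (1 + |s| ^ q) := by
    rcases le_total (|s|) 1 with hs1 | hs1
    · have : (1 + |s|) ^ q ≤ (2:ℝ) ^ q := by
        gcongr
        · linarith [abs_nonneg s]
      refine this.trans ?_
      nlinarith [rpow_pos_of_pos (two_pos (α := ℝ)) q,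
        Real.rpow_nonneg (abs_nonneg s) q]
    · have h1 : 1 + |s| ≤ 2 * |s| := by linarith
      have h2 : (1 + |s|) ^ q ≤ (2 * |s|) ^ q := by
        exact Real.rpow_le_rpow hbase h1 hq_pos.le
      have h3 : (2 * |s|) ^ q = 2 ^ q * |s| ^ q := by
        rw [Real.mul_rpow (by norm_num) (abs_nonneg s)]
      refine h2.trans ?_
      rw [h3]
      nlinarith [rpow_pos_of_pos (two_pos (α := ℝ)) q,
        Real.rpow_nonneg (abs_nonneg s) q]
  have step3 : |φ s| ≤ |φ 0| + K * 2 ^ q * (1 + |s| ^ q) := by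
    have h1 : |φ s| ≤ |φ 0| + |φ s - φ 0| := by
      have := abs_sub_abs_le_abs_sub (φ s) (φ 0)
      linarith [abs_sub_comm (φ s) (φ 0) ▸ this]
    have h2 := hphi_bound s
    have h3 := step1
    have h4 : K * (1 + |s|) ^ q ≤ K * (2 ^ q * (1 + |s| ^ q)) :=
      mul_le_mul_of_nonneg_left step2 hK_pos.le
    calc |φ s| ≤ |φ 0| + |φ s - φ 0| := h1
      _ ≤ |φ 0| + (h 0 + M * |s|) ^ p * |s| := by linarith
      _ ≤ |φ 0| + K * (1 + |s|) ^ q := by linarith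
      _ ≤ |φ 0| + K * (2 ^ q * (1 + |s| ^ q)) := by linarith
      _ = |φ 0| + K * 2 ^ q * (1 + |s| ^ q) := by ring
  have hone : (1:ℝ) ≤ 1 + |s| ^ q := by
    have := Real.rpow_nonneg (abs_nonneg s) q; linarith
  calc |φ s| ≤ |φ 0| + K * 2 ^ q * (1 + |s| ^ q) := step3
    _ ≤ (|φ 0| + K * 2 ^ q + 1) * (1 + |s| ^ q) := by
        have hA : (0:ℝ) ≤ |φ 0| := abs_nonneg _
        have hB : (0:ℝ) ≤ K * 2 ^ q := by positivity
        nlinarith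
end
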